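/- Let q = ax² + bxy + cy² be a primitive form of discriminant D, f > 1 an integer, and 0 ≤ g ≤ f. Suppose Q = q · R_g · U for some U ∈ SL₂(ℤ), where R_g = [[f,g],[0,1]] for g < f and R_f = [[1,0],[0,f]]. Then there exist a form q₀ properly equivalent to q and V ∈ SL₂(ℤ) such that Q = q₀ · R_f · V. -/

import Mathlib

/-- An integral binary quadratic form ax² + bxy + cy². -/
structure BQF where
  a : ℤ
  b : ℤ
  c : ℤ

namespace BQF

/-- Value of the form at (x, y). -/
def eval (q : BQF) (x y : ℤ) : ℤ := q.a * x ^ 2 + q.b * x * y + q.c * y ^ 2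

/-- Discriminant b² - 4ac. -/
def disc (q : BQF) : ℤ := q.b ^ 2 - 4 * q.a * q.c

/-- A form is primitive if gcd(a, b, c) = 1. -/
def IsPrimitive (q : BQF) : Prop := Int.gcd (Int.gcd q.a q.b) q.c = 1

/-- Right action: (q·M)(x,y) = q(px + ry, sx + ty) for M = [[p,r],[s,t]]. -/
def act (q : BQF) (M : Matrix (Fin 2) (Fin 2) ℤ) : BQF :=
  ⟨q.eval (M 0 0) (M 1 0),
   q.eval (M 0 0 + M 0 1) (M 1 0 + M 1 1) - q.eval (M 0 0) (M 1 0) - q.eval (M 0 1) (M 1 1),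
   q.eval (M 0 1) (M 1 1)⟩

/-- Proper equivalence: equivalence under the SL₂(ℤ) action. -/
def ProperEquiv (q q' : BQF) : Prop :=
  ∃ U : Matrix.SpecialLinearGroup (Fin 2) ℤ, q.act U.1 = q'

end BQF

/-- R_g = [[f,g],[0,1]] for g < f, and R_f = [[1,0],[0,f]] when g = f. -/
def Rmat (f g : ℤ) : Matrix (Fin 2) (Fin 2) ℤ :=
  if g = f then !![1, 0; 0, f] else !![f, g; 0, 1]


lemma BQF.act_mul (q : BQF) (M N : Matrix (Fin 2) (Fin 2) ℤ) :
    q.act (M * N) = (q.act M).act N := by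
  simp only [BQF.act, BQF.eval, Matrix.mul_apply, Fin.sum_univ_succ, Fin.sum_univ_zero, Fin.succ_zero_eq_one,
    BQF.mk.injEq]
  refine ⟨by ring, by ring, by ring⟩

lemma BQF.act_one (q : BQF) : q.act 1 = q := by
  simp only [BQF.act, BQF.eval, Matrix.one_apply]
  cases q; simp only [BQF.mk.injEq]; norm_num; ring

theorem stmt10 (q : BQF) (D : ℤ) (hq : q.IsPrimitive) (hd : q.disc = D)
    (f g : ℤ) (hf : 1 < f) (hg0 : 0 ≤ g) (hgf : g ≤ f)
    (Q : BQF) (U : Matrix.SpecialLinearGroup (Fin 2) ℤ) (hQ : Q = q.act (Rmat f g * U.1)) :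
    ∃ q₀ : BQF, ∃ V : Matrix.SpecialLinearGroup (Fin 2) ℤ,
      BQF.ProperEquiv q q₀ ∧ Q = q₀.act (Rmat f f * V.1) := by
  by_cases hgf' : g = f
  · exact ⟨q, U, ⟨1, BQF.act_one q⟩, by rw [hQ, hgf']⟩
  · have hW : (!![g, -1; 1, 0] : Matrix (Fin 2) (Fin 2) ℤ).det = 1 := by
      simp [Matrix.det_fin_two_of]
    have hS : (!![0, 1; -1, 0] : Matrix (Fin 2) (Fin 2) ℤ).det = 1 := by
      simp [Matrix.det_fin_two_of]
    refine ⟨q.act !![g, -1; 1, 0], ⟨!![0, 1; -1, 0], hS⟩ * U, ⟨⟨_, hW⟩, rfl⟩, ?_⟩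
    have hfac : Rmat f g = !![g, -1; 1, 0] * (Rmat f f * !![0, 1; -1, 0]) := by
      rw [Rmat, Rmat, if_neg hgf', if_pos rfl]
      ext i j
      fin_cases i <;> fin_cases j <;>
        simp [Matrix.mul_apply, Fin.sum_univ_succ]
    rw [hQ, hfac]
    change _ = (q.act !![g, -1; 1, 0]).act (Rmat f f * (!![0, 1; -1, 0] * (U : Matrix (Fin 2) (Fin 2) ℤ)))
    rw [show !![g, -1; 1, 0] * (Rmat f f * !![0, 1; -1, 0]) * (U : Matrix (Fin 2) (Fin 2) ℤ)
        = !![g, -1; 1, 0] * (Rmat f f * (!![0, 1; -1, 0] * (U : Matrix (Fin 2) (Fin 2) ℤ))) by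
      noncomm_ring]
    rw [BQF.act_mul, BQF.act_mul]
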